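/- Let m ≥ 1 and e ≥ 1 be integers, set d = m·e, and let a, b ≥ 0 be integers with a + b = d. Let y : {1,…,d} → ℤ/mℤ be a function each of whose fibers has exactly e elements. Suppose there exists a permutation μ of {1,…,d} with μ({1,…,a}) = {1,…,a} and such that y(μ(i)) = y(i) + 1 for all i ∈ {1,…,d}. Then m divides a, and for every c ∈ ℤ/mℤ the number of i ∈ {1,…,a} with y(i) = c equals a/m. -/
import Mathlib


/-!
Statement 12: let `m ≥ 1`, `e ≥ 1`, `d = m·e`, and `a + b = d`.  Let `y : Fin d → ℤ/m` have
all fibers of cardinality `e`.  Suppose there is a permutation `μ` of `Fin d` with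
`μ({i : i < a}) = {i : i < a}` and `y(μ i) = y i + 1` for all `i`.  Then `m ∣ a` and for
every `c : ZMod m` the number of `i < a` with `y i = c` equals `a / m`.
-/

/-- combinatorial lemma on Frobenius-stable orbits. -/
theorem fiber_count_of_frobenius_stable
    (m e : ℕ) (hm : 1 ≤ m) (he : 1 ≤ e) (d : ℕ) (hd : d = m * e)
    (a b : ℕ) (hab : a + b = d)
    (y : Fin d → ZMod m)
    (hfib : ∀ c : ZMod m, (Finset.filter (fun i => y i = c) Finset.univ).card = e)
    (μ : Equiv.Perm (Fin d))
    (hμa : (fun i => μ i) '' {i : Fin d | (i : ℕ) < a} = {i : Fin d | (i : ℕ) < a})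
    (hμy : ∀ i, y (μ i) = y i + 1) :
    m ∣ a ∧
      ∀ c : ZMod m,
        (Finset.filter (fun i => i.val < a ∧ y i = c) Finset.univ).card = a / m := by
  haveI : NeZero m := ⟨by omega⟩
  set S : ZMod m → Finset (Fin d) :=
    fun c => Finset.filter (fun i => i.val < a ∧ y i = c) Finset.univ with hS
  have hμlt : ∀ i : Fin d, (i : ℕ) < a → ((μ i : Fin d) : ℕ) < a := by
    intro i hi
    have : μ i ∈ {j : Fin d | (j : ℕ) < a} := by
      rw [← hμa]; exact ⟨i, hi, rfl⟩
    exact this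
  have hμlt' : ∀ i : Fin d, ((μ i : Fin d) : ℕ) < a → (i : ℕ) < a := by
    intro i hi
    have hmem : μ i ∈ (fun j => μ j) '' {j : Fin d | (j : ℕ) < a} := by
      rw [hμa]; exact hi
    obtain ⟨j, hj, hji⟩ := hmem
    have := μ.injective hji
    rwa [← this]
  have hshift : ∀ c, (S c).card = (S (c + 1)).card := by
    intro c
    apply Finset.card_bij (fun i _ => μ i)
    · intro i hi
      simp only [hS, Finset.mem_filter, Finset.mem_univ, true_and] at hi ⊢
      exact ⟨hμlt i hi.1, by rw [hμy, hi.2]⟩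
    · intro i _ j _ h; exact μ.injective h
    · intro j hj
      simp only [hS, Finset.mem_filter, Finset.mem_univ, true_and] at hj
      refine ⟨μ.symm j, ?_, by simp⟩
      simp only [hS, Finset.mem_filter, Finset.mem_univ, true_and]
      constructor
      · apply hμlt'; simpa using hj.1
      · have h1 := hμy (μ.symm j)
        rw [Equiv.apply_symm_apply] at h1
        have : y (μ.symm j) + 1 = c + 1 := by rw [← h1, hj.2]
        exact add_right_cancel this
  have hconstN : ∀ k : ℕ, (S ((k : ZMod m))).card = (S 0).card := by
    intro k
    induction k with
    | zero => simp
    | succ n ih =>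
      push_cast
      rw [← hshift, ih]
  have hconst : ∀ c : ZMod m, (S c).card = (S 0).card := by
    intro c
    have h := hconstN c.val
    rwa [ZMod.natCast_val, ZMod.cast_id] at h
  have hsum : ∑ c : ZMod m, (S c).card = a := by
    have ha : a ≤ d := by omega
    have hcard : (Finset.filter (fun i : Fin d => i.val < a) Finset.univ).card = a := by
      rw [← Finset.card_map (f := Fin.valEmbedding)]
      have : (Finset.filter (fun i : Fin d => i.val < a) Finset.univ).map Fin.valEmbedding
          = Finset.Iio a := by
        ext n
        simp only [Finset.mem_map, Finset.mem_filter, Finset.mem_univ, true_and,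
          Fin.valEmbedding_apply, Finset.mem_Iio]
        constructor
        · rintro ⟨i, hi, rfl⟩; exact hi
        · intro hn; exact ⟨⟨n, by omega⟩, hn, rfl⟩
      rw [this, Nat.card_Iio]
    rw [← hcard]
    rw [Finset.card_eq_sum_card_fiberwise (f := y)
      (t := Finset.univ) (fun i _ => Finset.mem_univ (y i))]
    apply Finset.sum_congr rfl
    intro c _
    congr 1
    simp [hS, Finset.filter_filter]
  have hmul : m * (S 0).card = a := by
    have : ∑ c : ZMod m, (S c).card = m * (S 0).card := by
      rw [Finset.sum_congr rfl (fun c _ => hconst c), Finset.sum_const,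
        Finset.card_univ, ZMod.card, smul_eq_mul]
    omega
  constructor
  · exact ⟨(S 0).card, hmul.symm⟩
  · intro c
    have : a / m = (S 0).card := by
      rw [← hmul, Nat.mul_div_cancel_left _ (by omega)]
    rw [show (Finset.filter (fun i => i.val < a ∧ y i = c) Finset.univ) = S c from rfl,
      hconst c, this]
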